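/- Let a, d, n be positive integers with a ≤ C(n+d-1, d) (so that [n]^d has at least a entries). Then the a-th entry of [n]^d equals the last d-fractal coefficient k_1 of a, where a = C(k_d,d) + C(k_{d-1},d-1) + ... + C(k_2,2) + C(k_1,1) is the d-fractal decomposition of a. Equivalently, the a-th entry of the infinite sequence [ℕ]^{d-1} = [1]^{d-1} ⌢ [2]^{d-1} ⌢ [3]^{d-1} ⌢ ... equals k_1. -/

import Mathlib

/-- The expansion `[σ]` of a finite sequence of positive integers. -/
def expand (σ : List ℕ) : List ℕ := (σ.map fun a => List.range' 1 a).flatten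

/-- The conditions `k_d > k_{d-1} > … > k_2 ≥ k_1 ≥ 1` on a tuple
`(k_1,…,k_d)` (encoded as `k : Fin d → ℕ` with `k ⟨i-1,_⟩ = k_i`). -/
def FracCond (d : ℕ) (k : Fin d → ℕ) : Prop :=
  (∀ h : 0 < d, 1 ≤ k ⟨0, h⟩) ∧
  ∀ (i : ℕ) (h : i + 1 < d),
    if i = 0 then k ⟨i, Nat.lt_of_succ_lt h⟩ ≤ k ⟨i + 1, h⟩
    else k ⟨i, Nat.lt_of_succ_lt h⟩ < k ⟨i + 1, h⟩

/-- `k : Fin d → ℕ` encodes the `d`-fractal decomposition of `a`: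
`a = C(k_d,d) + C(k_{d-1},d-1) + … + C(k_2,2) + C(k_1,1)` with
`k_d > k_{d-1} > … > k_2 ≥ k_1 ≥ 1` (where `C(p,q) = 0` if `p < q`). -/
def IsFracDecomp (d a : ℕ) (k : Fin d → ℕ) : Prop :=
  FracCond d k ∧ a = ∑ i : Fin d, (k i).choose ((i : ℕ) + 1)

/-- The `d`-fractal coefficients `[a]^{(d)} = (k_d-d+2, k_{d-1}-d+3, …, k_3-1, k_2, k_1)`
of a decomposition `k`: the coefficient `c_i` (for the term `C(k_i, i)`) is
`c_1 = k_1` and `c_i = k_i - i + 2` for `i ≥ 2`; in the `Fin d` encoding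
(index `i` stands for `k_{i+1}`) this is `c ⟨i⟩ = k ⟨i⟩ + 1 - i` for `i ≥ 1`. -/
def fracCoeff (d : ℕ) (k : Fin d → ℕ) (i : Fin d) : ℕ :=
  if (i : ℕ) = 0 then k i else k i + 1 - (i : ℕ)

/-- Let `a, d, n` be positive integers with `a ≤ C(n+d-1, d)`.  Then the `a`-th entry
of `[n]^d` (entries indexed from `1`, so at `0`-based position `a-1`) equals the last
`d`-fractal coefficient `k_1` of `a`, where
`a = C(k_d,d) + … + C(k_2,2) + C(k_1,1)` is the `d`-fractal decomposition of `a`.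
Here `[n]^d = expand^[d] [n]`, with `[n]^0 = (n)` the singleton sequence. -/
lemma expand_append (A B : List ℕ) : expand (A ++ B) = expand A ++ expand B := by
  simp [expand]

lemma expand_iter_append (d : ℕ) (A B : List ℕ) :
    expand^[d] (A ++ B) = expand^[d] A ++ expand^[d] B := by
  induction d generalizing A B with
  | zero => rfl
  | succ d ih => simp only [Function.iterate_succ_apply, expand_append, ih]

lemma expand_singleton (m : ℕ) : expand [m] = List.range' 1 m := by
  simp [expand]

lemma expand_iter_singleton (d m : ℕ) :
    expand^[d+1] [m] = expand^[d] (List.range' 1 m) := by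
  rw [Function.iterate_succ_apply, expand_singleton]

lemma expand_iter_nil (d : ℕ) : expand^[d] ([] : List ℕ) = [] := by
  induction d with
  | zero => rfl
  | succ d ih => rw [Function.iterate_succ_apply]; simpa [expand] using ih

lemma len_lemma (d : ℕ) : ∀ n, (expand^[d] (List.range' 1 n)).length = (n+d).choose (d+1) := by
  induction d with
  | zero => intro n; simp
  | succ d ih =>
    intro n
    induction n with
    | zero => simp [expand_iter_nil]
    | succ n ihn =>
      have h1 : List.range' 1 (n+1) = List.range' 1 n ++ [n + 1] := by
        have := List.range'_concat (step := 1) (s := 1) (n := n)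
        simpa [Nat.add_comm] using this
      rw [h1, expand_iter_append, List.length_append, ihn,
        expand_iter_singleton, ih (n+1)]
      have key : (n+d+2).choose (d+2) = (n+d+1).choose (d+1) + (n+d+1).choose (d+2) :=
        Nat.choose_succ_succ (n+d+1) (d+1)
      have e1 : (n + (d+1)).choose (d+1+1) = (n+d+1).choose (d+2) := rfl
      have e2 : (n + 1 + d).choose (d+1) = (n+d+1).choose (d+1) := by
        rw [show n + 1 + d = n + d + 1 by omega]
      have e3 : (n + 1 + (d+1)).choose (d+1+1) = (n+d+2).choose (d+2) := by
        rw [show n + 1 + (d+1) = n + d + 2 by omega]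
      omega

lemma frac_k_ge (d : ℕ) (k : Fin d → ℕ) (h : FracCond d k) :
    ∀ (i : ℕ) (hi : i < d), 1 ≤ k ⟨i, hi⟩ ∧ i ≤ k ⟨i, hi⟩ := by
  intro i
  induction i with
  | zero => intro hi; exact ⟨h.1 hi, Nat.zero_le _⟩
  | succ i ihi =>
    intro hi
    have hi' : i < d := Nat.lt_of_succ_lt hi
    have h2 := h.2 i hi
    obtain ⟨ha, hb⟩ := ihi hi'
    by_cases h0 : i = 0
    · subst h0
      rw [if_pos rfl] at h2
      exact ⟨le_trans ha h2, le_trans ha h2⟩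
    · rw [if_neg h0] at h2
      exact ⟨le_trans ha (le_of_lt h2), by omega⟩

lemma frac_restrict_cond (d : ℕ) (k : Fin (d+2) → ℕ) (h : FracCond (d+2) k) :
    FracCond (d+1) (fun i => k i.castSucc) := by
  constructor
  · intro hp
    exact h.1 (Nat.succ_pos _)
  · intro i hi
    have hi2 : i + 1 < d + 2 := Nat.lt_succ_of_lt hi
    have h2 := h.2 i hi2
    by_cases h0 : i = 0
    · rw [if_pos h0] at h2 ⊢
      exact h2
    · rw [if_neg h0] at h2 ⊢
      exact h2

/-- Key bound: a fractal decomposition with top entry bounded by `K` sums to at most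
`C(K, d+1)`. -/
lemma frac_bound : ∀ (d a : ℕ) (k : Fin (d+1) → ℕ), IsFracDecomp (d+1) a k →
    ∀ K : ℕ, (if d = 0 then k (Fin.last d) ≤ K else k (Fin.last d) < K) →
    a ≤ K.choose (d+1) := by
  intro d
  induction d with
  | zero =>
    intro a k hk K hK
    rw [if_pos rfl] at hK
    have hs : a = k 0 := by simpa using hk.2
    rw [Nat.choose_one_right, hs]
    exact hK
  | succ d ih =>
    intro a k hk K hK
    rw [if_neg (Nat.succ_ne_zero d)] at hK
    have hsum : a = (∑ i : Fin (d+1), (k i.castSucc).choose ((i : ℕ) + 1))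
        + (k (Fin.last (d+1))).choose (d+2) := by
      have := hk.2
      rw [Fin.sum_univ_castSucc] at this
      simpa using this
    set T := k (Fin.last (d+1)) with hT
    set a' := ∑ i : Fin (d+1), (k i.castSucc).choose ((i : ℕ) + 1) with ha'
    have hk' : IsFracDecomp (d+1) a' (fun i => k i.castSucc) :=
      ⟨frac_restrict_cond d k hk.1, rfl⟩
    have htop := hk.1.2 d (by omega)
    have ha'le : a' ≤ T.choose (d+1) := by
      apply ih a' _ hk' T
      exact htop
    have hcs : (T+1).choose (d+2) = T.choose (d+1) + T.choose (d+2) :=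
      Nat.choose_succ_succ T (d+1)
    have hmono : (T+1).choose (d+2) ≤ K.choose (d+2) := Nat.choose_le_choose _ hK
    have : (d+1).succ = d + 2 := rfl
    calc a = a' + T.choose (d+2) := hsum
      _ ≤ T.choose (d+1) + T.choose (d+2) := by omega
      _ = (T+1).choose (d+2) := hcs.symm
      _ ≤ K.choose (d+2) := hmono

lemma main_lemma : ∀ (d n a : ℕ) (k : Fin (d+1) → ℕ), 0 < n → 0 < a →
    a ≤ (n + d).choose (d+1) → IsFracDecomp (d+1) a k →
    (expand^[d+1] [n])[a-1]? = some (k ⟨0, Nat.succ_pos d⟩) := by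
  intro d
  induction d with
  | zero =>
    intro n a k hn ha hle hk
    have hsum : a = k 0 := by simpa using hk.2
    have hle' : a ≤ n := by simpa using hle
    rw [expand_iter_singleton, Function.iterate_zero_apply,
      List.getElem?_range' (s := 1) (step := 1) (show a - 1 < n by omega)]
    congr 1
    have h0 : (⟨0, Nat.succ_pos 0⟩ : Fin 1) = 0 := rfl
    rw [h0, ← hsum]
    omega
  | succ d ih =>
    intro n a k hn ha hle hk
    have hle2 : a ≤ (n+d+1).choose (d+2) := hle
    set K := k (Fin.last (d+1)) with hKdef
    have hsum : a = (∑ i : Fin (d+1), (k i.castSucc).choose ((i : ℕ) + 1))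
        + K.choose (d+2) := by
      have := hk.2
      rw [Fin.sum_univ_castSucc] at this
      simpa using this
    set a' := ∑ i : Fin (d+1), (k i.castSucc).choose ((i : ℕ) + 1) with ha'def
    have hk' : IsFracDecomp (d+1) a' (fun i => k i.castSucc) :=
      ⟨frac_restrict_cond d k hk.1, rfl⟩
    -- a' ≥ 1
    have hk0 : 1 ≤ k ⟨0, by omega⟩ := hk.1.1 (by omega)
    have ha'pos : 0 < a' := by
      have hone : (k ((0 : Fin (d+1)).castSucc)).choose ((((0 : Fin (d+1)) : ℕ)) + 1) ≤ a' :=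
        Finset.single_le_sum (f := fun i : Fin (d+1) => (k i.castSucc).choose ((i : ℕ) + 1))
          (fun i _ => Nat.zero_le _) (Finset.mem_univ 0)
      have h0 : (k ((0 : Fin (d+1)).castSucc)).choose ((((0 : Fin (d+1)) : ℕ)) + 1)
          = k ⟨0, by omega⟩ := by
        norm_num
      omega
    -- K ≥ d + 1
    have hKge : d + 1 ≤ K := (frac_k_ge (d+2) k hk.1 (d+1) (by omega)).2
    -- a' ≤ C(K, d+1)
    have htop := hk.1.2 d (by omega)
    have ha'le : a' ≤ K.choose (d+1) := by
      apply frac_bound d a' _ hk' K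
      exact htop
    set m := K - d with hmdef
    have hm1 : 1 ≤ m := by omega
    have hmd : m + d = K := by omega
    -- m ≤ n
    have hmn : m ≤ n := by
      by_contra hc
      push_neg at hc
      have h2 : (n+d+1).choose (d+2) ≤ K.choose (d+2) :=
        Nat.choose_le_choose _ (by omega)
      omega
    -- decompose the list
    have hsplit1 : List.range' 1 (m-1) ++ List.range' m (n - (m-1)) = List.range' 1 n := by
      have h := List.range'_append (s := 1) (m := m-1) (n := n - (m-1)) (step := 1)
      rw [show 1 + 1 * (m-1) = m by omega] at h
      rw [h]
      congr 1
      omega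
    have hsplit2 : List.range' m 1 ++ List.range' (m+1) (n - m) = List.range' m (n - (m-1)) := by
      have h := List.range'_append (s := m) (m := 1) (n := n - m) (step := 1)
      rw [show m + 1 * 1 = m + 1 by omega] at h
      rw [h]
      congr 1
      omega
    have hone : List.range' m 1 = [m] := by simp
    have hlist : expand^[d+1+1] [n]
        = expand^[d+1] (List.range' 1 (m-1))
          ++ (expand^[d+1] [m] ++ expand^[d+1] (List.range' (m+1) (n-m))) := by
      rw [expand_iter_singleton, ← hsplit1, ← hsplit2, hone, expand_iter_append,
        expand_iter_append]
    have hlenA : (expand^[d+1] (List.range' 1 (m-1))).length = K.choose (d+2) := by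
      rw [len_lemma (d+1) (m-1)]
      congr 1
      omega
    have hlenB : (expand^[d+1] [m]).length = K.choose (d+1) := by
      rw [expand_iter_singleton, len_lemma d m, hmd]
    rw [hlist,
      List.getElem?_append_right (by omega : (expand^[d+1] (List.range' 1 (m-1))).length ≤ a - 1),
      hlenA, show a - 1 - K.choose (d+2) = a' - 1 by omega,
      List.getElem?_append (l₁ := expand^[d+1] [m]), if_pos (by omega),
      ih m a' (fun i => k i.castSucc) (by omega) ha'pos (by rw [hmd]; exact ha'le) hk']
    rfl

theorem entry_of_iterated_expansion (n d a : ℕ) (hn : 0 < n) (hd : 0 < d) (ha : 0 < a)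
    (hle : a ≤ (n + d - 1).choose d) (k : Fin d → ℕ) (hk : IsFracDecomp d a k) :
    (expand^[d] [n])[a - 1]? = some (k ⟨0, hd⟩) := by
  obtain ⟨d', rfl⟩ : ∃ d', d = d' + 1 := ⟨d - 1, by omega⟩
  exact main_lemma d' n a k hn ha
    (by rwa [show n + (d' + 1) - 1 = n + d' by omega] at hle) hk
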